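/- Let q be a prime power and let m > r ≥ 1 be integers; set n = (q^m − 1)/(q − 1), t = (q^r − 1)/(q − 1), l = q^{m−r}, and n_0 = (q^{m−r} − 1)/(q − 1), so that n = l·t + n_0. Identify F_q^n with (F_q^l)^t × F_q^{n_0} and, for l-ary quasigroups σ_1, …, σ_t of order q on F_q, define σ̄(x) = (σ_1(x̄_1), …, σ_t(x̄_t)) where x̄_1, …, x̄_t are the t blocks of length l of x. Let C* ⊆ F_q^t be a perfect code, and suppose that for every μ ∈ C* we are given a code K_μ ⊆ F_q^n with minimum Hamming distance at least 3 and cardinality q^{n − m − (t − r)} such that σ̄(x) = μ for every x ∈ K_μ. Then C = ⋃_{μ ∈ C*} K_μ is a perfect code in F_q^n. -/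

import Mathlib

/-- A perfect 1-error-correcting code: every word of the ambient space is within
Hamming distance 1 of exactly one codeword. -/
def IsPerfectCode {ι α : Type*} [Fintype ι] [DecidableEq α] (C : Set (ι → α)) : Prop :=
  ∀ x : ι → α, ∃! c, c ∈ C ∧ hammingDist x c ≤ 1

/-- An `ι`-ary quasigroup: a function `f : (ι → S) → S` that is bijective in each
argument when the other arguments are fixed. -/
def IsMultiQuasigroup {ι S : Type*} [DecidableEq ι] (f : (ι → S) → S) : Prop :=
  ∀ (i : ι) (x : ι → S), Function.Bijective fun a => f (Function.update x i a)

section aux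

open Finset

/-- The cardinality of a Hamming ball of radius 1. -/
lemma ball_card {ι α : Type*} [Fintype ι] [Fintype α] [DecidableEq ι] [DecidableEq α]
    (c : ι → α) :
    Fintype.card {y : ι → α // hammingDist c y ≤ 1}
      = 1 + Fintype.card ι * (Fintype.card α - 1) := by
  classical
  have hd1 : ∀ (i : ι) (a : α), a ≠ c i → hammingDist c (Function.update c i a) = 1 := by
    intro i a ha
    have : ({j | c j ≠ Function.update c i a j} : Finset ι) = {i} := by
      ext j
      simp only [Finset.mem_filter, Finset.mem_univ, true_and, Finset.mem_singleton,
        Function.update]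
      by_cases hj : j = i
      · subst hj; simp [Ne.symm ha]
      · simp [hj]
    simp [hammingDist, this]
  let e : Option (Σ i : ι, {a : α // a ≠ c i}) → {y : ι → α // hammingDist c y ≤ 1} :=
    fun p => match p with
      | none => ⟨c, by simp⟩
      | some ⟨i, a, ha⟩ => ⟨Function.update c i a, le_of_eq (hd1 i a ha)⟩
  have hbij : Function.Bijective e := by
    constructor
    · rintro (_ | ⟨i, a, ha⟩) (_ | ⟨j, b, hb⟩) h
      · rfl
      · exfalso
        have := congrArg (fun z => z.1 j) h
        simp [e, Function.update_self] at this
        exact hb this.symm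
      · exfalso
        have := congrArg (fun z => z.1 i) h
        simp [e, Function.update_self] at this
        exact ha this
      · have hv := congrArg Subtype.val h
        simp only [e] at hv
        by_cases hij : i = j
        · subst hij
          have : a = b := by
            have := congrFun hv i; simpa using this
          subst this; rfl
        · exfalso
          have := congrFun hv i
          rw [Function.update_self, Function.update_of_ne hij] at this
          exact ha this
    · rintro ⟨y, hy⟩
      rcases Nat.le_one_iff_eq_zero_or_eq_one.1 hy with h0 | h1
      · exact ⟨none, by simp [e, eq_of_hammingDist_eq_zero h0]⟩
      · obtain ⟨i, hi⟩ := Finset.card_eq_one.1 h1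
        have hiy : c i ≠ y i := by
          have : i ∈ ({j | c j ≠ y j} : Finset ι) := by rw [hi]; exact Finset.mem_singleton_self i
          simpa using this
        refine ⟨some ⟨i, y i, Ne.symm hiy⟩, ?_⟩
        apply Subtype.ext
        funext j
        by_cases hj : j = i
        · subst hj; simp [e]
        · have : j ∉ ({j | c j ≠ y j} : Finset ι) := by rw [hi]; simpa using hj
          simp only [Finset.mem_filter, Finset.mem_univ, true_and, not_not] at this
          simp [e, Function.update_of_ne hj, this]
  rw [← Fintype.card_of_bijective hbij]
  simp only [Fintype.card_option, Fintype.card_sigma]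
  have : ∀ i : ι, Fintype.card {a : α // a ≠ c i} = Fintype.card α - 1 := by
    intro i
    rw [Fintype.card_subtype_compl, Fintype.card_subtype_eq]
  simp [this, add_comm, Finset.sum_const]

/-- Between two words at Hamming distance at most 2 there is a midpoint. -/
lemma exists_mid {ι α : Type*} [Fintype ι] [DecidableEq ι] [DecidableEq α]
    (x y : ι → α) (h : hammingDist x y ≤ 2) :
    ∃ w, hammingDist w x ≤ 1 ∧ hammingDist w y ≤ 1 := by
  classical
  by_cases h1 : hammingDist x y ≤ 1
  · exact ⟨y, by rwa [hammingDist_comm], by simp⟩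
  · have hne : ({i | x i ≠ y i} : Finset ι).Nonempty := by
      rw [← Finset.card_pos]
      have : 0 < hammingDist x y := by omega
      exact this
    obtain ⟨i, hi⟩ := hne
    refine ⟨Function.update x i (y i), ?_, ?_⟩
    · have : ({j | Function.update x i (y i) j ≠ x j} : Finset ι) ⊆ {i} := by
        intro j hj
        simp only [Finset.mem_filter, Finset.mem_univ, true_and] at hj
        by_cases hji : j = i
        · simp [hji]
        · exfalso; exact hj (Function.update_of_ne hji _ _)
      calc hammingDist (Function.update x i (y i)) x
          = ({j | Function.update x i (y i) j ≠ x j} : Finset ι).card := rfl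
        _ ≤ 1 := by simpa using Finset.card_le_card this
    · have hsub : ({j | Function.update x i (y i) j ≠ y j} : Finset ι)
          ⊆ ({j | x j ≠ y j} : Finset ι).erase i := by
        intro j hj
        simp only [Finset.mem_filter, Finset.mem_univ, true_and] at hj
        rw [Finset.mem_erase]
        by_cases hji : j = i
        · exfalso; subst hji; simp at hj
        · rw [Function.update_of_ne hji] at hj
          exact ⟨hji, by simp [hj]⟩
      calc hammingDist (Function.update x i (y i)) y
          ≤ (({j | x j ≠ y j} : Finset ι).erase i).card := Finset.card_le_card hsub
        _ = hammingDist x y - 1 := by rw [Finset.card_erase_of_mem hi]; rfl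
        _ ≤ 1 := by omega

section counting
variable {ι α : Type*} [Fintype ι] [Fintype α] [DecidableEq ι] [DecidableEq α]

/-- The obvious map from the disjoint union of radius-1 balls around codewords
to the ambient space. -/
noncomputable def ballMap (C : Set (ι → α)) :
    (Σ c : C, {y : ι → α // hammingDist (c : ι → α) y ≤ 1}) → (ι → α) :=
  fun p => p.2.1

lemma card_sigma_balls (C : Set (ι → α)) :
    Nat.card (Σ c : C, {y : ι → α // hammingDist (c : ι → α) y ≤ 1})
      = Nat.card C * (1 + Fintype.card ι * (Fintype.card α - 1)) := by
  classical
  have : Fintype C := Fintype.ofFinite _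
  rw [Nat.card_eq_fintype_card, Nat.card_eq_fintype_card, Fintype.card_sigma]
  simp [ball_card, Finset.sum_const, mul_comm]

lemma ballMap_inj_of_dist (C : Set (ι → α))
    (hd : ∀ c ∈ C, ∀ c' ∈ C, c ≠ c' → 3 ≤ hammingDist c c') :
    Function.Injective (ballMap C) := by
  rintro ⟨⟨c, hc⟩, ⟨y, hy⟩⟩ ⟨⟨c', hc'⟩, ⟨y', hy'⟩⟩ h
  simp only [ballMap] at h
  change hammingDist c y ≤ 1 at hy
  change hammingDist c' y' ≤ 1 at hy'
  have hcc : c = c' := by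
    by_contra hne
    have h3 := hd c hc c' hc' hne
    have : hammingDist c c' ≤ 2 := by
      calc hammingDist c c' ≤ hammingDist c y + hammingDist y c' := hammingDist_triangle _ _ _
        _ ≤ 2 := by
            have : hammingDist y c' = hammingDist c' y' := by
              rw [h, hammingDist_comm]
            omega
    omega
  subst hcc
  subst h
  rfl

/-- A code with minimum distance `3` and the cardinality of a perfect code
is a perfect code. -/
lemma perfect_of_card (C : Set (ι → α))
    (hd : ∀ c ∈ C, ∀ c' ∈ C, c ≠ c' → 3 ≤ hammingDist c c')
    (hcard : Nat.card C * (1 + Fintype.card ι * (Fintype.card α - 1))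
      = Fintype.card (ι → α)) :
    IsPerfectCode C := by
  classical
  have : Fintype C := Fintype.ofFinite _
  have hinj := ballMap_inj_of_dist C hd
  have hcardeq : Fintype.card (Σ c : C, {y : ι → α // hammingDist (c : ι → α) y ≤ 1})
      = Fintype.card (ι → α) := by
    rw [← Nat.card_eq_fintype_card, card_sigma_balls, hcard]
  have hbij : Function.Bijective (ballMap C) :=
    (Fintype.bijective_iff_injective_and_card _).2 ⟨hinj, hcardeq⟩
  intro x
  obtain ⟨⟨⟨c, hc⟩, ⟨y, hy⟩⟩, hyx⟩ := hbij.2 x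
  simp only [ballMap] at hyx
  change hammingDist c y ≤ 1 at hy
  subst hyx
  refine ⟨c, ⟨hc, by rwa [hammingDist_comm]⟩, ?_⟩
  rintro c' ⟨hc', hd'⟩
  by_contra hne
  have h3 := hd c' hc' c hc hne
  have : hammingDist c' c ≤ 2 := by
    calc hammingDist c' c ≤ hammingDist c' y + hammingDist y c := hammingDist_triangle _ _ _
      _ ≤ 2 := by
          have h1 : hammingDist c' y = hammingDist y c' := hammingDist_comm _ _
          have h2 : hammingDist y c = hammingDist c y := hammingDist_comm _ _
          omega
  omega

/-- Conversely, a perfect code has the right cardinality. -/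
lemma card_of_perfect (C : Set (ι → α)) (hC : IsPerfectCode C) :
    Nat.card C * (1 + Fintype.card ι * (Fintype.card α - 1)) = Fintype.card (ι → α) := by
  classical
  have : Fintype C := Fintype.ofFinite _
  rw [← card_sigma_balls, ← Nat.card_eq_fintype_card]
  apply Nat.card_eq_of_bijective (ballMap C)
  constructor
  · rintro ⟨⟨c, hc⟩, ⟨y, hy⟩⟩ ⟨⟨c', hc'⟩, ⟨y', hy'⟩⟩ h
    simp only [ballMap] at h
    change hammingDist c y ≤ 1 at hy
    change hammingDist c' y' ≤ 1 at hy'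
    have hcc : c = c' := by
      obtain ⟨cu, _, hu⟩ := hC y
      have e1 : c = cu := hu c ⟨hc, by rwa [hammingDist_comm]⟩
      have e2 : c' = cu := hu c' ⟨hc', by rw [← h, hammingDist_comm] at hy'; exact hy'⟩
      rw [e1, e2]
    subst hcc; subst h; rfl
  · intro x
    obtain ⟨c, ⟨hc, hdist⟩, _⟩ := hC x
    exact ⟨⟨⟨c, hc⟩, ⟨x, by rwa [hammingDist_comm]⟩⟩, rfl⟩

end counting

end aux

/-- The combining construction: the union over an outer perfect code `C*` of
`μ`-components (distance-3 codes of the right cardinality satisfying the generalized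
parity-check law `σ̄(x) = μ`) is a perfect code.  Words of `F_q^n` are identified with
functions on `(Fin t × Fin l) ⊕ Fin n₀`, i.e. `t` blocks of length `l = q^(m-r)`
followed by `n₀` remaining coordinates. -/
theorem stmt_1 {q m r n t l n0 : ℕ} (F : Type*) [Field F] [Fintype F] [DecidableEq F]
    (hq : Fintype.card F = q) (hr : 1 ≤ r) (hmr : r < m)
    (hn : n = (q ^ m - 1) / (q - 1)) (ht : t = (q ^ r - 1) / (q - 1))
    (hl : l = q ^ (m - r)) (hn0 : n0 = (q ^ (m - r) - 1) / (q - 1))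
    (σ : Fin t → ((Fin l → F) → F)) (hσ : ∀ i, IsMultiQuasigroup (σ i))
    (Cstar : Set (Fin t → F)) (hCstar : IsPerfectCode Cstar)
    (K : (Fin t → F) → Set ((Fin t × Fin l) ⊕ Fin n0 → F))
    (hKdist : ∀ μ ∈ Cstar, ∀ x ∈ K μ, ∀ y ∈ K μ, x ≠ y → 3 ≤ hammingDist x y)
    (hKcard : ∀ μ ∈ Cstar, (K μ).ncard = q ^ (n - m - (t - r)))
    (hKσ : ∀ μ ∈ Cstar, ∀ x ∈ K μ,
      (fun i => σ i (fun j => x (Sum.inl (i, j)))) = μ) :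
    IsPerfectCode (⋃ μ ∈ Cstar, K μ) := by
  classical
  -- basic facts about q
  have hq2 : 2 ≤ q := by
    rw [← hq]; exact Fintype.one_lt_card
  -- geometric sums
  set s : ℕ → ℕ := fun k => ∑ i ∈ Finset.range k, q ^ i with hs
  have hgeom : ∀ k, s k * (q - 1) = q ^ k - 1 := by
    intro k
    induction k with
    | zero => simp [hs]
    | succ k ih =>
      have hpk : 1 ≤ q ^ k := Nat.one_le_pow _ _ (by omega)
      have hstep : s (k + 1) = s k + q ^ k := Finset.sum_range_succ _ _
      have hq' : q ^ (k + 1) = q ^ k * q := pow_succ q k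
      have hmul : q ^ k * (q - 1) = q ^ k * q - q ^ k := by
        rw [Nat.mul_sub, mul_one]
      have hle : q ^ k ≤ q ^ k * q := Nat.le_mul_of_pos_right _ (by omega)
      rw [hstep, add_mul, ih, hmul, hq']
      omega
  have hdiv : ∀ k, (q ^ k - 1) / (q - 1) = s k := by
    intro k
    rw [← hgeom k, Nat.mul_div_cancel _ (by omega)]
  have hpow1 : ∀ k, 1 ≤ q ^ k := fun k => Nat.one_le_pow _ _ (by omega)
  have hball : ∀ k, 1 + s k * (q - 1) = q ^ k := by
    intro k
    have := hgeom k
    have := hpow1 k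
    omega
  have hsk : ∀ k, k ≤ s k := by
    intro k
    calc k = ∑ _i ∈ Finset.range k, 1 := by simp
      _ ≤ s k := Finset.sum_le_sum fun i _ => hpow1 i
  have hsplit : ∀ a b : ℕ, s (a + b) = s a + q ^ a * s b := by
    intro a b
    rw [hs]
    simp only []
    rw [Finset.sum_range_add, Finset.mul_sum]
    congr 1
    refine Finset.sum_congr rfl fun i _ => ?_
    rw [pow_add]
  -- identities for the parameters
  have hns : n = s m := by rw [hn, hdiv]
  have hts : t = s r := by rw [ht, hdiv]
  have hn0s : n0 = s (m - r) := by rw [hn0, hdiv]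
  have hmsum : m = (m - r) + r := by omega
  have hsm : s m = s (m - r) + q ^ (m - r) * s r := by
    conv_lhs => rw [hmsum]
    exact hsplit _ _
  have hnsplit : n = l * t + n0 := by
    rw [hns, hts, hn0s, hl, hsm]
    ring
  have hnm : m ≤ n := by rw [hns]; exact hsk m
  have htr : r ≤ t := by rw [hts]; exact hsk r
  have hkey : t + m ≤ n + r := by
    have h1 : n = t + q ^ r * s (m - r) := by
      rw [hns, hts]
      have hm' : m = r + (m - r) := by omega
      conv_lhs => rw [hm']
      exact hsplit _ _
    have h2 : m - r ≤ q ^ r * s (m - r) :=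
      le_trans (hsk _) (Nat.le_mul_of_pos_left _ (by positivity))
    omega
  -- the inner codes are indexed consistently: μ is recovered from any x ∈ K μ
  have hμeq : ∀ μ ∈ Cstar, ∀ x ∈ K μ, ∀ μ' ∈ Cstar, x ∈ K μ' → μ = μ' := by
    intro μ hμ x hx μ' hμ' hx'
    rw [← hKσ μ hμ x hx, ← hKσ μ' hμ' x hx']
  -- minimum distance 3 of the outer code
  have hCstar3 : ∀ μ ∈ Cstar, ∀ μ' ∈ Cstar, μ ≠ μ' → 3 ≤ hammingDist μ μ' := by
    intro μ hμ μ' hμ' hne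
    by_contra hlt
    have h2 : hammingDist μ μ' ≤ 2 := by omega
    obtain ⟨w, hw1, hw2⟩ := exists_mid μ μ' h2
    obtain ⟨cu, _, hu⟩ := hCstar w
    exact hne ((hu μ ⟨hμ, hw1⟩).trans (hu μ' ⟨hμ', hw2⟩).symm)
  -- minimum distance 3 of the combined code
  have hdistC : ∀ c ∈ ⋃ μ ∈ Cstar, K μ, ∀ c' ∈ ⋃ μ ∈ Cstar, K μ, c ≠ c' →
      3 ≤ hammingDist c c' := by
    intro c hc c' hc' hne
    simp only [Set.mem_iUnion, exists_prop] at hc hc'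
    obtain ⟨μ, hμ, hcK⟩ := hc
    obtain ⟨μ', hμ', hcK'⟩ := hc'
    by_cases hμμ : μ = μ'
    · subst hμμ
      exact hKdist μ hμ c hcK c' hcK' hne
    · have h3 := hCstar3 μ hμ μ' hμ' hμμ
      have hwit : ∀ i : Fin t, ∃ j : Fin l,
          μ i ≠ μ' i → c (Sum.inl (i, j)) ≠ c' (Sum.inl (i, j)) := by
        intro i
        by_cases hi : μ i = μ' i
        · have hl0 : 0 < l := by rw [hl]; positivity
          exact ⟨⟨0, hl0⟩, fun h => absurd hi h⟩
        · by_contra hcon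
          push_neg at hcon
          apply hi
          have hblocks : (fun j => c (Sum.inl (i, j))) = fun j => c' (Sum.inl (i, j)) :=
            funext fun j => (hcon j).2
          have e1 := congrFun (hKσ μ hμ c hcK) i
          have e2 := congrFun (hKσ μ' hμ' c' hcK') i
          rw [← e1, ← e2, hblocks]
      choose J hJ using hwit
      have hle : hammingDist μ μ' ≤ hammingDist c c' := by
        apply Finset.card_le_card_of_injOn (fun i => Sum.inl (i, J i))
        · intro i hi
          simp only [Finset.mem_coe, Finset.mem_filter, Finset.mem_univ, true_and] at hi ⊢
          exact hJ i hi
        · intro i _ i' _ h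
          have := Sum.inl.inj h
          exact (Prod.mk.injEq _ _ _ _ ▸ this).1
      omega
  -- cardinalities
  have hufin : Fintype ↥Cstar := Fintype.ofFinite _
  have hKfin : ∀ μ : ↥Cstar, Fintype ↥(K (μ : Fin t → F)) := fun μ => Fintype.ofFinite _
  -- card of the union of the K's
  have hcardC : Nat.card ↥(⋃ μ ∈ Cstar, K μ) = Nat.card ↥Cstar * q ^ (n - m - (t - r)) := by
    let G : (Σ μ : ↥Cstar, ↥(K (μ : Fin t → F))) → ↥(⋃ μ ∈ Cstar, K μ) :=
      fun p => ⟨p.2.1, Set.mem_biUnion p.1.2 p.2.2⟩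
    have hGbij : Function.Bijective G := by
      constructor
      · rintro ⟨⟨μ, hμ⟩, ⟨x, hx⟩⟩ ⟨⟨μ', hμ'⟩, ⟨x', hx'⟩⟩ h
        have hxx : x = x' := congrArg Subtype.val h
        subst hxx
        have : μ = μ' := hμeq μ hμ x hx μ' hμ' hx'
        subst this
        rfl
      · rintro ⟨x, hx⟩
        simp only [Set.mem_iUnion, exists_prop] at hx
        obtain ⟨μ, hμ, hxK⟩ := hx
        exact ⟨⟨⟨μ, hμ⟩, ⟨x, hxK⟩⟩, rfl⟩
    rw [← Nat.card_eq_of_bijective G hGbij, Nat.card_eq_fintype_card, Fintype.card_sigma]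
    have hKval : ∀ μ : ↥Cstar, Fintype.card ↥(K (μ : Fin t → F)) = q ^ (n - m - (t - r)) := by
      intro μ
      rw [← Nat.card_eq_fintype_card, Nat.card_coe_set_eq]
      exact hKcard _ μ.2
    rw [Finset.sum_congr rfl fun μ _ => hKval μ]
    rw [Finset.sum_const, Finset.card_univ, smul_eq_mul, Nat.card_eq_fintype_card]
  -- card of the outer code
  have hcardCstar : Nat.card ↥Cstar = q ^ (t - r) := by
    have h := card_of_perfect Cstar hCstar
    simp only [Fintype.card_fun, Fintype.card_fin, hq] at h
    have hbr : 1 + t * (q - 1) = q ^ r := by rw [hts]; exact hball r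
    rw [hbr] at h
    have hqt : q ^ t = q ^ (t - r) * q ^ r := by
      rw [← pow_add, Nat.sub_add_cancel htr]
    rw [hqt] at h
    exact Nat.eq_of_mul_eq_mul_right (by positivity) h
  -- conclude
  apply perfect_of_card _ hdistC
  have hcardι : Fintype.card ((Fin t × Fin l) ⊕ Fin n0) = n := by
    simp only [Fintype.card_sum, Fintype.card_prod, Fintype.card_fin, hnsplit]
    ring
  rw [hcardι, hq, Fintype.card_fun, hcardι, hq]
  have hbm : 1 + n * (q - 1) = q ^ m := by rw [hns]; exact hball m
  rw [hbm]
  rw [hcardC, hcardCstar, ← pow_add, ← pow_add]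
  congr 1
  omega
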